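/- Let $G$ be a finite abelian group, $H \leq G$ a subgroup, $c \geq 1$, and let $M_1, \dots, M_{2^c - 1}$ be subsets of $G$. Then there exist cosets $H_1, \dots, H_c$ of $H$ in $G$ such that for every $1 \leq i \leq c$: $\frac{1}{|H|} \sum_{x \in \{0,1\}^{i-1}} \big| M_{2^{i-1} + \sum_{j=1}^{i-1} x_j 2^{j-1}} \cap (H_i + \sum_{j=1}^{i-1} x_j H_j) \big| \geq \sum_{j=2^{i-1}}^{2^i - 1} \frac{|M_j|}{|G|}$, where addition of cosets is the induced operation in $G/H$. -/

import Mathlib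

open Finset

section Aux
open scoped Classical

variable {G : Type*} [AddCommGroup G] [Fintype G] (H : AddSubgroup G) (M : ℕ → Finset G)

/-- The condition at step `i`, depending only on values of `h` at indices `≤ i`. -/
def bbCond (h : ℕ → G) (i : ℕ) : Prop :=
  Fintype.card H * ∑ j ∈ Finset.Ico (2 ^ i) (2 ^ (i + 1)), (M j).card ≤
    Fintype.card G * ∑ x : Fin i → Bool,
      ((M (2 ^ i + ∑ j : Fin i, if x j then 2 ^ (j : ℕ) else 0)).filter
        (fun y => y - (h i + ∑ j : Fin i, if x j then h (j : ℕ) else 0) ∈ H)).card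

lemma bbCond_congr {h h' : ℕ → G} {i : ℕ} (hag : ∀ j ≤ i, h j = h' j)
    (hc : bbCond H M h i) : bbCond H M h' i := by
  unfold bbCond at hc ⊢
  have : ∀ x : Fin i → Bool,
      h i + ∑ j : Fin i, (if x j then h (j : ℕ) else 0) =
      h' i + ∑ j : Fin i, (if x j then h' (j : ℕ) else 0) := by
    intro x
    rw [hag i le_rfl]
    congr 1
    exact Finset.sum_congr rfl fun j _ => by
      rw [hag j (le_of_lt j.isLt)]
  calc Fintype.card ↥H * ∑ j ∈ Finset.Ico (2 ^ i) (2 ^ (i + 1)), (M j).card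
      ≤ _ := hc
    _ = _ := by
        congr 1
        exact Finset.sum_congr rfl fun x _ => by rw [this x]

lemma bb_count (A : Finset G) (s : G) :
    ∑ t : G, (A.filter (fun y => y - (t + s) ∈ H)).card = A.card * Fintype.card H := by
  have inner : ∀ y : G, (Finset.univ.filter (fun t : G => y - (t + s) ∈ H)).card
      = Fintype.card H := by
    intro y
    rw [← Fintype.card_subtype]
    exact Fintype.card_congr
      { toFun := fun t => ⟨y - ((t : G) + s), t.2⟩
        invFun := fun a => ⟨y - s - (a : G),
          by rw [show y - (y - s - (a : G) + s) = (a : G) by abel]; exact a.2⟩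
        left_inv := fun t => Subtype.ext (by abel_nf; simp; abel)
        right_inv := fun a => Subtype.ext (by abel_nf; simp; abel) }
  simp_rw [Finset.card_filter]
  rw [Finset.sum_comm]
  calc ∑ y ∈ A, ∑ t : G, (if y - (t + s) ∈ H then 1 else 0)
      = ∑ y ∈ A, Fintype.card H := Finset.sum_congr rfl fun y _ => by
        rw [← inner y, Finset.card_filter]
    _ = A.card * Fintype.card H := by rw [Finset.sum_const, smul_eq_mul]

lemma bb_reindex (i : ℕ) (F : ℕ → ℕ) :
    ∑ x : Fin i → Bool, F (2 ^ i + ∑ j : Fin i, if x j then 2 ^ (j : ℕ) else 0) =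
      ∑ j ∈ Finset.Ico (2 ^ i) (2 ^ (i + 1)), F j := by
  rw [Finset.sum_Ico_eq_sum_range]
  have h2 : 2 ^ (i + 1) - 2 ^ i = 2 ^ i := by rw [pow_succ]; omega
  rw [h2, ← Fin.sum_univ_eq_sum_range]
  refine Fintype.sum_equiv
    ((Equiv.arrowCongr (Equiv.refl (Fin i)) finTwoEquiv.symm).trans finFunctionFinEquiv)
    _ _ (fun x => ?_)
  congr 1
  simp only [Equiv.trans_apply, finFunctionFinEquiv_apply]
  congr 1
  refine Finset.sum_congr rfl fun j _ => ?_
  simp [Equiv.arrowCongr, finTwoEquiv]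
  cases x j <;> simp

lemma bb_exists (i : ℕ) (prev : ℕ → G) :
    ∃ t : G, bbCond H M (Function.update prev i t) i := by
  have hne : (Finset.univ : Finset G).Nonempty := Finset.univ_nonempty
  have hsum : ∑ t : G, ∑ x : Fin i → Bool,
      ((M (2 ^ i + ∑ j : Fin i, if x j then 2 ^ (j : ℕ) else 0)).filter
        (fun y => y - (t + ∑ j : Fin i, if x j then prev (j : ℕ) else 0) ∈ H)).card =
      Fintype.card H * ∑ j ∈ Finset.Ico (2 ^ i) (2 ^ (i + 1)), (M j).card := by
    rw [Finset.sum_comm]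
    have := fun x : Fin i → Bool => bb_count H
      (M (2 ^ i + ∑ j : Fin i, if x j then 2 ^ (j : ℕ) else 0))
      (∑ j : Fin i, if x j then prev (j : ℕ) else 0)
    simp_rw [this]
    rw [← Finset.sum_mul, mul_comm]
    congr 1
    exact bb_reindex i (fun n => (M n).card)
  obtain ⟨t, -, ht⟩ := Finset.exists_le_of_sum_le (f := fun _ : G =>
      Fintype.card H * ∑ j ∈ Finset.Ico (2 ^ i) (2 ^ (i + 1)), (M j).card)
    (g := fun t : G => Fintype.card G * ∑ x : Fin i → Bool,
      ((M (2 ^ i + ∑ j : Fin i, if x j then 2 ^ (j : ℕ) else 0)).filter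
        (fun y => y - (t + ∑ j : Fin i, if x j then prev (j : ℕ) else 0) ∈ H)).card)
    hne (by
      rw [Finset.sum_const, ← Finset.mul_sum, smul_eq_mul, Finset.card_univ, hsum])
  refine ⟨t, ?_⟩
  unfold bbCond
  have h1 : Function.update prev i t i = t := Function.update_self i t prev
  have h2 : ∀ x : Fin i → Bool,
      ∑ j : Fin i, (if x j then Function.update prev i t (j : ℕ) else 0) =
      ∑ j : Fin i, (if x j then prev (j : ℕ) else 0) :=
    fun x => Finset.sum_congr rfl fun j _ => by
      rw [Function.update_of_ne (Nat.ne_of_lt j.isLt)]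
  simp_rw [h1, h2]
  exact ht

lemma bb_main (c : ℕ) : ∃ h : ℕ → G, ∀ i < c, bbCond H M h i := by
  induction c with
  | zero => exact ⟨fun _ => 0, fun i hi => absurd hi (Nat.not_lt_zero i)⟩
  | succ c ih =>
    obtain ⟨h, hh⟩ := ih
    obtain ⟨t, ht⟩ := bb_exists H M c h
    refine ⟨Function.update h c t, fun i hi => ?_⟩
    rcases Nat.lt_succ_iff_lt_or_eq.mp hi with hi | rfl
    · exact bbCond_congr H M (fun j hj => (Function.update_of_ne (by omega) t h).symm)
        (hh i hi)
    · exact ht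

end Aux

open Classical in
/-- Extended Bose-Burton proposition: for a subgroup `H` of a finite abelian
group `G` and subsets `M₁, …, M_{2^c - 1}` of `G`, there are cosets
`H₁, …, H_c` of `H` (given by representatives `h 0, …, h (c-1)`) such that for
each `i`, `(1/|H|) ∑_{x ∈ {0,1}^{i-1}} |M_{2^{i-1} + ∑ xⱼ2^{j-1}} ∩
(H_i + ∑ xⱼ Hⱼ)| ≥ ∑_{j=2^{i-1}}^{2^i-1} |M_j| / |G|`. -/
theorem extended_bose_burton (G : Type*) [AddCommGroup G] [Fintype G]
    (H : AddSubgroup G) (c : ℕ) (hc : 1 ≤ c) (M : ℕ → Finset G) :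
    ∃ h : Fin c → G, ∀ i : Fin c,
      Fintype.card H *
          ∑ j ∈ Finset.Ico (2 ^ (i : ℕ)) (2 ^ ((i : ℕ) + 1)), (M j).card ≤
        Fintype.card G *
          ∑ x : Fin (i : ℕ) → Bool,
            ((M (2 ^ (i : ℕ) + ∑ j : Fin (i : ℕ), if x j then 2 ^ (j : ℕ) else 0)).filter
              (fun y => y - (h i + ∑ j : Fin (i : ℕ),
                if x j then h (Fin.castLE i.isLt.le j) else 0) ∈ H)).card := by
  obtain ⟨h, hh⟩ := bb_main H M c
  refine ⟨fun i => h i, fun i => ?_⟩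
  have := hh i i.isLt
  unfold bbCond at this
  exact this
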